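/- The quadratic form G̃(V, t) = -(λ̃/2)(tr V)² - μ̃·tr(V²) - α⁽⁴⁷⁾(tr V)t - (1/2)(a⁽⁴⁴⁾ + γ/β²)t² on symmetric 3×3 matrices V and scalars t (with E = 0) is positive definite if and only if μ̃ < 0, 3λ̃ + 2μ̃ < 0, a⁽⁴⁴⁾ + γ/β² < 0, and (3λ̃ + 2μ̃)(a⁽⁴⁴⁾ + γ/β²) > 3(α⁽⁴⁷⁾)². -/

import Mathlib

open Matrix

lemma quad_pos_aux {A B C s t : ℝ} (hA : 0 < A) (hC : 0 < C) (hD : B^2 < 4*A*C)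
    (h : s ≠ 0 ∨ t ≠ 0) : 0 < A*s^2 + B*s*t + C*t^2 := by
  rcases eq_or_ne t 0 with rfl | ht
  · have hs : s ≠ 0 := h.resolve_right (by simp)
    have : 0 < s^2 := by positivity
    nlinarith
  · have ht2 : 0 < t^2 := by positivity
    nlinarith [sq_nonneg (2*A*s + B*t), mul_pos (sub_pos.mpr hD) ht2]

set_option maxHeartbeats 1000000 in
theorem stmt_2 (lamT muT α47 a44 γ β : ℝ) (hβ : β ≠ 0) :
    (∀ (V : Matrix (Fin 3) (Fin 3) ℝ) (t : ℝ), V.IsSymm → ¬(V = 0 ∧ t = 0) →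
      0 < -(lamT/2) * (V.trace)^2 - muT * (∑ i, ∑ j, V i j * V j i)
          - α47 * V.trace * t - (1/2) * (a44 + γ/β^2) * t^2) ↔
    (muT < 0 ∧ 3*lamT + 2*muT < 0 ∧ a44 + γ/β^2 < 0 ∧
      (3*lamT + 2*muT) * (a44 + γ/β^2) > 3 * α47^2) := by
  set K := a44 + γ/β^2 with hK
  clear_value K
  constructor
  · intro H
    -- μ < 0 using traceless diagonal matrix diag(1,-1,0)
    have hmu : muT < 0 := by
      have h := H (Matrix.diagonal ![1, -1, 0]) 0 (Matrix.isSymm_diagonal _) ?_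
      · have htr : (Matrix.diagonal ![(1:ℝ), -1, 0]).trace = 0 := by
          simp [Matrix.trace_diagonal, Fin.sum_univ_three]
        have hsum : (∑ i, ∑ j, (Matrix.diagonal ![(1:ℝ), -1, 0]) i j *
            (Matrix.diagonal ![(1:ℝ), -1, 0]) j i) = 2 := by
          simp [Fin.sum_univ_three, Matrix.diagonal] <;> norm_num
        rw [htr, hsum] at h
        nlinarith
      · rintro ⟨hV0, -⟩
        have := congrFun (congrFun hV0 0) 0
        simp [Matrix.diagonal] at this
    -- key: binary quadratic positivity from scalar matrices
    have key : ∀ s t : ℝ, ¬(s = 0 ∧ t = 0) →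
        0 < -(3/2)*(3*lamT + 2*muT)*s^2 - 3*α47*s*t - (1/2)*K*t^2 := by
      intro s t hst
      have h := H (Matrix.diagonal (fun _ => s)) t (Matrix.isSymm_diagonal _) ?_
      · have htr : (Matrix.diagonal (fun _ : Fin 3 => s)).trace = 3*s := by
          simp [Matrix.trace_diagonal, Fin.sum_univ_three] <;> ring
        have hsum : (∑ i, ∑ j, (Matrix.diagonal (fun _ : Fin 3 => s)) i j *
            (Matrix.diagonal (fun _ : Fin 3 => s)) j i) = 3*s^2 := by
          simp [Fin.sum_univ_three, Matrix.diagonal] <;> ring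
        rw [htr, hsum] at h
        nlinarith
      · rintro ⟨hV0, ht0⟩
        apply hst
        refine ⟨?_, ht0⟩
        have := congrFun (congrFun hV0 0) 0
        simpa [Matrix.diagonal] using this
    have h2 : 3*lamT + 2*muT < 0 := by
      have := key 1 0 (by simp)
      nlinarith
    have h3 : K < 0 := by
      have := key 0 1 (by simp)
      nlinarith
    have h4 : (3*lamT + 2*muT) * K > 3 * α47^2 := by
      have := key (3*α47) (-3*(3*lamT + 2*muT)) (by
        rintro ⟨-, ht0⟩
        have : 3*lamT + 2*muT = 0 := by linarith
        linarith)
      nlinarith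
    exact ⟨hmu, h2, h3, h4⟩
  · rintro ⟨h1, h2, h3, h4⟩ V t hsym hnz
    have e01 : V 1 0 = V 0 1 := hsym.apply 0 1
    have e02 : V 2 0 = V 0 2 := hsym.apply 0 2
    have e12 : V 2 1 = V 1 2 := hsym.apply 1 2
    set a := V 0 0 with ha
    set d := V 1 1 with hd
    set f := V 2 2 with hf
    set b := V 0 1 with hb
    set g := V 0 2 with hg
    set e := V 1 2 with he
    have htr : V.trace = a + d + f := by
      simp [Matrix.trace, Matrix.diag, Fin.sum_univ_three]
      rfl
    have hsum : (∑ i, ∑ j, V i j * V j i)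
        = a^2 + d^2 + f^2 + 2*b^2 + 2*g^2 + 2*e^2 := by
      simp only [Fin.sum_univ_three]
      rw [e01, e02, e12]
      ring
    rw [htr, hsum]
    set s := a + d + f with hs
    clear_value a d f b g e
    clear_value s
    -- quadratic part positivity data
    have hA : (0:ℝ) < -(lamT/2 + muT/3) := by linarith
    have hC : (0:ℝ) < -K/2 := by linarith
    have hD : (-α47)^2 < 4 * (-(lamT/2 + muT/3)) * (-K/2) := by nlinarith
    -- 3Q ≥ s²
    have hQs : s^2 ≤ 3 * (a^2 + d^2 + f^2 + 2*b^2 + 2*g^2 + 2*e^2) := by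
      rw [hs]
      nlinarith [sq_nonneg (a - d), sq_nonneg (a - f), sq_nonneg (d - f),
        sq_nonneg b, sq_nonneg g, sq_nonneg e]
    by_cases hV : V = 0
    · have ht : t ≠ 0 := fun h => hnz ⟨hV, h⟩
      have ha0 : a = 0 := by rw [ha, hV]; rfl
      have hd0 : d = 0 := by rw [hd, hV]; rfl
      have hf0 : f = 0 := by rw [hf, hV]; rfl
      have hb0 : b = 0 := by rw [hb, hV]; rfl
      have hg0 : g = 0 := by rw [hg, hV]; rfl
      have he0 : e = 0 := by rw [he, hV]; rfl
      have hs0 : s = 0 := by rw [hs, ha0, hd0, hf0]; ring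
      have ht2 : 0 < t^2 := by positivity
      rw [hs0, ha0, hd0, hf0, hb0, hg0, he0]
      nlinarith [mul_pos (neg_pos.mpr h3) ht2]
    · -- V ≠ 0 : Q > 0
      have hex : ∃ i j, V i j ≠ 0 := by
        by_contra h
        push_neg at h
        exact hV (by ext i j; simpa using h i j)
      have hor6 : a ≠ 0 ∨ d ≠ 0 ∨ f ≠ 0 ∨ b ≠ 0 ∨ g ≠ 0 ∨ e ≠ 0 := by
        obtain ⟨i, j, hij⟩ := hex
        fin_cases i <;> fin_cases j
        · exact Or.inl (by rw [ha]; exact hij)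
        · exact Or.inr (Or.inr (Or.inr (Or.inl (by rw [hb]; exact hij))))
        · exact Or.inr (Or.inr (Or.inr (Or.inr (Or.inl (by rw [hg]; exact hij)))))
        · exact Or.inr (Or.inr (Or.inr (Or.inl (by rw [← e01]; exact hij))))
        · exact Or.inr (Or.inl (by rw [hd]; exact hij))
        · exact Or.inr (Or.inr (Or.inr (Or.inr (Or.inr (by rw [he]; exact hij)))))
        · exact Or.inr (Or.inr (Or.inr (Or.inr (Or.inl (by rw [← e02]; exact hij)))))
        · exact Or.inr (Or.inr (Or.inr (Or.inr (Or.inr (by rw [← e12]; exact hij)))))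
        · exact Or.inr (Or.inr (Or.inl (by rw [hf]; exact hij)))
      have hQpos : 0 < a^2 + d^2 + f^2 + 2*b^2 + 2*g^2 + 2*e^2 := by
        have sq_pos : ∀ x : ℝ, x ≠ 0 → 0 < x^2 := fun x hx =>
          lt_of_le_of_ne (sq_nonneg x) (Ne.symm (pow_ne_zero 2 hx))
        rcases hor6 with h | h | h | h | h | h <;>
          linarith [sq_pos _ h, sq_nonneg a, sq_nonneg d, sq_nonneg f,
            sq_nonneg b, sq_nonneg g, sq_nonneg e]
      by_cases hst : s = 0 ∧ t = 0
      · obtain ⟨hs0, ht0⟩ := hst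
        rw [hs0, ht0]
        nlinarith
      · have hor : s ≠ 0 ∨ t ≠ 0 := by
          by_contra h
          push_neg at h
          exact hst ⟨h.1, h.2⟩
        have hquad := quad_pos_aux hA hC hD hor
        have hprod : 0 ≤ (-muT) * (3 * (a^2 + d^2 + f^2 + 2*b^2 + 2*g^2 + 2*e^2) - s^2) := by
          apply mul_nonneg (by linarith)
          linarith
        nlinarith [hquad, hprod]
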